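/- arXiv:1809.05186 — 6 statements merged into one kernel-verified Lean document; each statement's English description precedes it below -/
import Mathlib

section
/- If a Tychonoff space X has a minimal point-separating set F of continuous real-valued functions with |F| = τ, then (X × X) \ Δ_X contains a subset D of cardinality τ that is closed and discrete in the subspace (X × X) \ Δ_X. -/
def SepFun {X : Type*} [TopologicalSpace X] (F : Set C(X, ℝ)) : Prop :=
  ∀ x y : X, x ≠ y → ∃ f ∈ F, f x ≠ f y

def MinSepFun {X : Type*} [TopologicalSpace X] (F : Set C(X, ℝ)) : Prop :=
  SepFun F ∧ ∀ G ⊂ F, ¬ SepFun G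

/-- If `X` has a minimal point-separating set `F ⊆ C(X,ℝ)` with `|F| = τ`, then the
complement of the diagonal in `X × X` contains a `τ`-sized subset that is closed and
discrete in the subspace `(X × X) \ Δ_X`. -/
theorem stmt1 {X : Type*} [TopologicalSpace X] [T35Space X]
    (F : Set C(X, ℝ)) (hF : MinSepFun F) (τ : Cardinal) (hτ : Cardinal.mk F = τ) :
    ∃ D : Set {p : X × X // p.1 ≠ p.2}, Cardinal.mk D = τ ∧
      IsClosed D ∧ DiscreteTopology D := by
  classical
  obtain ⟨hsep, hmin⟩ := hF
  have key : ∀ f : F, ∃ p : {p : X × X // p.1 ≠ p.2},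
      (∀ g ∈ F, g ≠ (f : C(X, ℝ)) → g p.1.1 = g p.1.2) ∧
      (f : C(X, ℝ)) p.1.1 ≠ (f : C(X, ℝ)) p.1.2 := by
    rintro ⟨f, hf⟩
    have hss : F \ {f} ⊂ F := Set.sdiff_singleton_ssubset.2 hf
    have hns := hmin _ hss
    simp only [SepFun, not_forall] at hns
    obtain ⟨x, y, hxy, hng⟩ := hns
    push_neg at hng
    have heq : ∀ g ∈ F, g ≠ f → g x = g y := fun g hg hgf =>
      hng g ⟨hg, hgf⟩
    obtain ⟨h, hhF, hhxy⟩ := hsep x y hxy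
    have hhf : h = f := by
      by_contra hne
      exact hhxy (heq h hhF hne)
    refine ⟨⟨(x, y), hxy⟩, heq, ?_⟩
    simpa [hhf] using hhxy
  choose φ hφ1 hφ2 using key
  have hinj : Function.Injective φ := by
    intro f g hfg
    by_contra hne
    have h1 : (g : C(X, ℝ)) (φ f).1.1 = (g : C(X, ℝ)) (φ f).1.2 :=
      hφ1 f g g.2 (fun h => hne (Subtype.ext h.symm))
    rw [hfg] at h1
    exact hφ2 g h1
  refine ⟨Set.range φ, by rw [Cardinal.mk_range_eq φ hinj, hτ], ?_⟩
  rw [← isDiscrete_iff_discreteTopology, isClosed_and_discrete_iff]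
  intro y
  obtain ⟨f, hfF, hfy⟩ := hsep y.1.1 y.1.2 y.2
  set U : Set {p : X × X // p.1 ≠ p.2} :=
    {p | f p.1.1 ≠ f p.1.2} with hU
  have hUopen : IsOpen U := by
    apply isOpen_ne_fun
    · exact f.continuous.comp (continuous_fst.comp continuous_subtype_val)
    · exact f.continuous.comp (continuous_snd.comp continuous_subtype_val)
  have hUmem : y ∈ U := hfy
  have hUD : U ∩ Set.range φ ⊆ {φ ⟨f, hfF⟩} := by
    rintro p ⟨hpU, g, rfl⟩
    have hgf : (g : C(X, ℝ)) = f := by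
      by_contra hne
      exact hpU (hφ1 g f hfF (fun h => hne h.symm))
    have : g = (⟨f, hfF⟩ : F) := Subtype.ext hgf
    rw [this]
    rfl
  have hS : (U ∩ {φ ⟨f, hfF⟩}ᶜ) ∈ nhdsWithin y {y}ᶜ := by
    by_cases hy : y = φ ⟨f, hfF⟩
    · rw [← hy]
      exact Filter.inter_mem (mem_nhdsWithin_of_mem_nhds (hUopen.mem_nhds hUmem))
        self_mem_nhdsWithin
    · exact mem_nhdsWithin_of_mem_nhds
        ((hUopen.inter (isClosed_singleton.isOpen_compl)).mem_nhds ⟨hUmem, hy⟩)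
  rw [Filter.disjoint_principal_right]
  apply Filter.mem_of_superset hS
  rintro p ⟨hpU, hpne⟩ hpD
  exact hpne (hUD ⟨hpU, hpD⟩)
end

section
/- The Čech–Stone compactification βω of the countable discrete space ω has no minimal point-separating set of continuous real-valued functions. -/
open Filter Set Topology

/-- Two distinct ultrafilters are distinguished by a set in one but not the other. -/
lemma uf_exists_mem_not_mem {u v : Ultrafilter ℕ} (h : u ≠ v) :
    ∃ S : Set ℕ, S ∈ u ∧ S ∉ v := by
  by_contra hc
  push_neg at hc
  exact h (Ultrafilter.coe_le_coe.mp fun s hs => hc s hs).symm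

/-- "βω has no nontrivial convergent sequences", combinatorial form: a sequence of
ultrafilters indexed by an infinite set, converging pointwise to `z` but never equal
to `z`, is impossible. -/
lemma noConv (x : ℕ → Ultrafilter ℕ) (z : Ultrafilter ℕ) (N : Set ℕ) (hN : N.Infinite)
    (hconv : ∀ A : Set ℕ, A ∈ z → {n | n ∈ N ∧ A ∉ x n}.Finite)
    (hne : ∀ n ∈ N, x n ≠ z) : False := by
  have key : ∀ G : Set ℕ, G ∈ z → ∃ p : ℕ × Set ℕ × Set ℕ,
      p.1 ∈ N ∧ p.2.1 ∈ x p.1 ∧ p.2.2 ∈ z ∧ p.2.2 ⊆ G ∧ p.2.1 ⊆ G ∧ p.2.1 ∩ p.2.2 = ∅ := by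
    intro G hG
    obtain ⟨n, hn⟩ := (hN.diff (hconv G hG)).nonempty
    have hnN : n ∈ N := hn.1
    have hGx : G ∈ x n := by
      by_contra hGx; exact hn.2 ⟨hn.1, hGx⟩
    obtain ⟨S, hSx, hSz⟩ := uf_exists_mem_not_mem (hne n hnN)
    refine ⟨⟨n, G ∩ S, G ∩ Sᶜ⟩, hnN, inter_mem hGx hSx,
      inter_mem hG (Ultrafilter.compl_mem_iff_notMem.2 hSz),
      inter_subset_left, inter_subset_left, ?_⟩
    ext a
    simp only [mem_inter_iff, mem_empty_iff_false, iff_false, mem_compl_iff]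
    tauto
  choose! p hp using key
  set next : {G : Set ℕ // G ∈ z} → {G : Set ℕ // G ∈ z} :=
    fun G => ⟨(p G.1).2.2, (hp G.1 G.2).2.2.1⟩ with hnext
  set Gs : ℕ → {G : Set ℕ // G ∈ z} := fun k => next^[k] ⟨Set.univ, univ_mem⟩ with hGs
  set nn : ℕ → ℕ := fun k => (p (Gs k).1).1 with hnn
  set B : ℕ → Set ℕ := fun k => (p (Gs k).1).2.1 with hB
  have hGsucc : ∀ k, (Gs (k+1)).1 = (p (Gs k).1).2.2 := by
    intro k
    exact congrArg Subtype.val (Function.iterate_succ_apply' next k ⟨Set.univ, univ_mem⟩)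
  have hfacts : ∀ k, nn k ∈ N ∧ B k ∈ x (nn k) ∧ (Gs (k+1)).1 ⊆ (Gs k).1 ∧
      B k ⊆ (Gs k).1 ∧ B k ∩ (Gs (k+1)).1 = ∅ := by
    intro k
    have h := hp (Gs k).1 (Gs k).2
    rw [hGsucc k]
    exact ⟨h.1, h.2.1, h.2.2.2.1, h.2.2.2.2.1, h.2.2.2.2.2⟩
  have hmono : ∀ j k, j ≤ k → (Gs k).1 ⊆ (Gs j).1 := by
    intro j k hjk
    induction k with
    | zero => simp_all
    | succ k ih =>
      rcases Nat.lt_or_ge j (k+1) with h | h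
      · exact ((hfacts k).2.2.1).trans (ih (Nat.lt_succ_iff.mp h))
      · have : j = k + 1 := le_antisymm hjk h
        subst this; rfl
  have hdisj : ∀ j k, j ≠ k → B j ∩ B k = ∅ := by
    have main : ∀ j k, j < k → B j ∩ B k = ∅ := by
      intro j k hjk
      have h1 : B k ⊆ (Gs (j+1)).1 := ((hfacts k).2.2.2.1).trans (hmono (j+1) k hjk)
      have h2 := (hfacts j).2.2.2.2
      apply eq_empty_of_subset_empty
      intro a ⟨haj, hak⟩
      rw [← h2]; exact ⟨haj, h1 hak⟩
    intro j k hjk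
    rcases hjk.lt_or_gt with h | h
    · exact main j k h
    · rw [inter_comm]; exact main k j h
  have hninj : Function.Injective nn := by
    intro j k hjk
    by_contra hne'
    have h1 : B j ∈ x (nn j) := (hfacts j).2.1
    have h2 : B k ∈ x (nn j) := hjk ▸ (hfacts k).2.1
    have := inter_mem h1 h2
    rw [hdisj j k hne'] at this
    exact (x (nn j)).neBot.ne (Filter.empty_mem_iff_bot.mp this)
  set A : Set ℕ := ⋃ k, B (2 * k) with hA
  by_cases hAz : A ∈ z
  · -- odd indices contradict
    have hbad := hconv A hAz
    have hmem : ∀ i : ℕ, nn (2 * i + 1) ∈ {n | n ∈ N ∧ A ∉ x n} := by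
      intro i
      refine ⟨(hfacts (2 * i + 1)).1, ?_⟩
      intro hAx
      have hBx : B (2 * i + 1) ∈ x (nn (2 * i + 1)) := (hfacts (2 * i + 1)).2.1
      have hint := inter_mem hAx hBx
      have hempty : A ∩ B (2 * i + 1) = ∅ := by
        rw [hA, iUnion_inter]
        apply iUnion_eq_empty.mpr
        intro k
        exact hdisj (2 * k) (2 * i + 1) (by omega)
      rw [hempty] at hint
      exact (x (nn (2 * i + 1))).neBot.ne (Filter.empty_mem_iff_bot.mp hint)
    have hinj : Function.Injective (fun i : ℕ => nn (2 * i + 1)) := by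
      intro a b hab
      have := hninj hab
      omega
    exact (Set.infinite_of_injective_forall_mem hinj hmem) hbad
  · have hAcz : Aᶜ ∈ z := Ultrafilter.compl_mem_iff_notMem.2 hAz
    have hbad := hconv Aᶜ hAcz
    have hmem : ∀ i : ℕ, nn (2 * i) ∈ {n | n ∈ N ∧ Aᶜ ∉ x n} := by
      intro i
      refine ⟨(hfacts (2 * i)).1, ?_⟩
      intro hAx
      have hBx : B (2 * i) ∈ x (nn (2 * i)) := (hfacts (2 * i)).2.1
      have hAmem : A ∈ x (nn (2 * i)) :=
        Filter.mem_of_superset hBx (subset_iUnion (fun k => B (2 * k)) i)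
      have hint := inter_mem hAx hAmem
      rw [compl_inter_self] at hint
      exact (x (nn (2 * i))).neBot.ne (Filter.empty_mem_iff_bot.mp hint)
    have hinj : Function.Injective (fun i : ℕ => nn (2 * i)) := by
      intro a b hab
      have := hninj hab
      omega
    exact (Set.infinite_of_injective_forall_mem hinj hmem) hbad

/-- Combinatorial countable compactness of `βω × βω` minus the diagonal:
given sequences of ultrafilters with `x n ≠ y n`, some set belongs to infinitely
many `x n` while missing the corresponding `y n`. -/
lemma star (x y : ℕ → Ultrafilter ℕ) (hxy : ∀ n, x n ≠ y n) :
    ∃ A : Set ℕ, {n | A ∈ x n ∧ A ∉ y n}.Infinite := by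
  by_contra hcon
  push_neg at hcon
  have H : ∀ A : Set ℕ, {n | A ∈ x n ∧ A ∉ y n}.Finite := by
    intro A
    rcases (hcon A) with h
    exact h
  -- the splitting step
  have claimS : ∀ N C : Set ℕ, N.Infinite → (∀ n ∈ N, C ∈ x n ∧ C ∈ y n) →
      ∃ q : ℕ × Set ℕ × Set ℕ × Set ℕ,
        q.1 ∈ N ∧ q.2.1 ∈ x q.1 ∧ q.2.1 ∈ y q.1 ∧ q.2.2.1.Infinite ∧ q.2.2.1 ⊆ N ∧
        (∀ n ∈ q.2.2.1, q.2.2.2 ∈ x n ∧ q.2.2.2 ∈ y n) ∧ q.2.2.2 ⊆ C ∧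
        q.2.1 ∩ q.2.2.2 = ∅ ∧ q.2.1 ⊆ C := by
    intro N C hNinf hNC
    by_cases hsplit : ∃ A : Set ℕ, {n | n ∈ N ∧ A ∈ x n}.Infinite ∧ {n | n ∈ N ∧ A ∉ x n}.Infinite
    · obtain ⟨A, hA0, hA1⟩ := hsplit
      set W : Set ℕ := C ∩ Aᶜ with hW
      set C' : Set ℕ := C ∩ A with hC'
      have hWx : ∀ n, n ∈ N → A ∉ x n → W ∈ x n := fun n hn hAn =>
        inter_mem (hNC n hn).1 (Ultrafilter.compl_mem_iff_notMem.2 hAn)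
      obtain ⟨m, hm⟩ := (hA1.diff (H W)).nonempty
      have hmN : m ∈ N := hm.1.1
      have hWxm : W ∈ x m := hWx m hmN hm.1.2
      have hWym : W ∈ y m := by
        by_contra hWy
        exact hm.2 ⟨hWxm, hWy⟩
      set N' : Set ℕ := {n | n ∈ N ∧ A ∈ x n} \ {n | C' ∈ x n ∧ C' ∉ y n} with hN'
      refine ⟨⟨m, W, N', C'⟩, hmN, hWxm, hWym, hA0.diff (H C'), ?_, ?_, inter_subset_left, ?_,
        inter_subset_left⟩
      · intro n hn; exact hn.1.1
      · intro n hn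
        have hCx : C' ∈ x n := inter_mem (hNC n hn.1.1).1 hn.1.2
        refine ⟨hCx, ?_⟩
        by_contra hCy
        exact hn.2 ⟨hCx, hCy⟩
      · ext a
        simp only [hW, hC', mem_inter_iff, mem_compl_iff, mem_empty_iff_false, iff_false]
        tauto
    · -- no splitting: x n converges along N; derive False
      exfalso
      push_neg at hsplit
      have hdich : ∀ A : Set ℕ, {n | n ∈ N ∧ A ∈ x n}.Finite ∨ {n | n ∈ N ∧ A ∉ x n}.Finite := by
        intro A
        by_cases h0 : {n | n ∈ N ∧ A ∈ x n}.Finite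
        · exact Or.inl h0
        · exact Or.inr (hsplit A h0)
      -- the pointwise limit ultrafilter
      set zf : Filter ℕ :=
        { sets := {A | {n | n ∈ N ∧ A ∉ x n}.Finite}
          univ_sets := by
            apply Set.Finite.subset (Set.finite_empty)
            intro n hn
            exact (hn.2 univ_mem).elim
          sets_of_superset := by
            intro A B hA hAB
            apply hA.subset
            intro n hn
            exact ⟨hn.1, fun h => hn.2 (Filter.mem_of_superset h hAB)⟩
          inter_sets := by
            intro A B hA hB
            apply Set.Finite.subset (hA.union hB)
            intro n hn
            by_cases hax : A ∈ x n
            · by_cases hbx : B ∈ x n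
              · exact (hn.2 (inter_mem hax hbx)).elim
              · exact Or.inr ⟨hn.1, hbx⟩
            · exact Or.inl ⟨hn.1, hax⟩ } with hzf
      have hmem_zf : ∀ A : Set ℕ, A ∈ zf ↔ {n | n ∈ N ∧ A ∉ x n}.Finite := fun A => Iff.rfl
      have hcompl : ∀ A : Set ℕ, Aᶜ ∉ zf ↔ A ∈ zf := by
        intro A
        rw [hmem_zf, hmem_zf]
        constructor
        · intro h
          have h1 : {n | n ∈ N ∧ Aᶜ ∉ x n}.Infinite := h
          have h2 : {n | n ∈ N ∧ A ∈ x n}.Infinite := by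
            apply h1.mono
            intro n hn
            exact ⟨hn.1, by
              by_contra hax
              exact hn.2 (Ultrafilter.compl_mem_iff_notMem.2 hax)⟩
          rcases hdich A with h3 | h3
          · exact (h2 h3).elim
          · exact h3
        · intro h hinf
          have h2 : {n | n ∈ N ∧ A ∈ x n}.Infinite := by
            apply Set.Infinite.mono ?_ (hNinf.diff h)
            intro n hn
            refine ⟨hn.1, ?_⟩
            by_contra hax
            exact hn.2 ⟨hn.1, hax⟩
          apply h2
          apply hinf.subset
          intro n hn
          exact ⟨hn.1, fun hc => (Ultrafilter.compl_mem_iff_notMem.mp hc) hn.2⟩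
      set z : Ultrafilter ℕ := Ultrafilter.ofComplNotMemIff zf hcompl with hz
      have hmem_z : ∀ A : Set ℕ, A ∈ z ↔ {n | n ∈ N ∧ A ∉ x n}.Finite := fun A => Iff.rfl
      set M : Set ℕ := {n | n ∈ N ∧ x n = z} with hM
      by_cases hMinf : M.Infinite
      · -- y n converges to z on M, but y n ≠ z there
        apply noConv y z M hMinf
        · intro A hA
          apply Set.Finite.subset (((hmem_z A).mp hA).union (H A))
          intro n hn
          by_cases hax : A ∈ x n
          · exact Or.inr ⟨hax, hn.2⟩
          · exact Or.inl ⟨hn.1.1, hax⟩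
        · intro n hn
          rw [← hn.2]
          exact (hxy n).symm
      · have hM' : (N \ M).Infinite := hNinf.diff (Set.not_infinite.mp hMinf)
        apply noConv x z (N \ M) hM'
        · intro A hA
          apply Set.Finite.subset ((hmem_z A).mp hA)
          intro n hn
          exact ⟨hn.1.1, hn.2⟩
        · intro n hn
          intro hxz
          exact hn.2 ⟨hn.1, hxz⟩
  -- iterate the splitting to produce a strongly discrete family of pairs
  choose! q hq using claimS
  set St := {s : Set ℕ × Set ℕ // s.1.Infinite ∧ ∀ n ∈ s.1, s.2 ∈ x n ∧ s.2 ∈ y n} with hSt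
  set next : St → St := fun s =>
    ⟨⟨(q s.1.1 s.1.2).2.2.1, (q s.1.1 s.1.2).2.2.2⟩,
      (hq s.1.1 s.1.2 s.2.1 s.2.2).2.2.2.1,
      (hq s.1.1 s.1.2 s.2.1 s.2.2).2.2.2.2.2.1⟩ with hnext
  set s0 : St := ⟨⟨Set.univ, Set.univ⟩, Set.infinite_univ,
    fun n _ => ⟨univ_mem, univ_mem⟩⟩ with hs0
  set Gs : ℕ → St := fun k => next^[k] s0 with hGs
  set m : ℕ → ℕ := fun k => (q (Gs k).1.1 (Gs k).1.2).1 with hm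
  set W : ℕ → Set ℕ := fun k => (q (Gs k).1.1 (Gs k).1.2).2.1 with hW
  have hGsucc : ∀ k, (Gs (k+1)).1 = ⟨(q (Gs k).1.1 (Gs k).1.2).2.2.1, (q (Gs k).1.1 (Gs k).1.2).2.2.2⟩ := by
    intro k
    exact congrArg Subtype.val (Function.iterate_succ_apply' next k s0)
  have hfacts : ∀ k, W k ∈ x (m k) ∧ W k ∈ y (m k) ∧ (Gs (k+1)).1.2 ⊆ (Gs k).1.2 ∧
      W k ∩ (Gs (k+1)).1.2 = ∅ ∧ W k ⊆ (Gs k).1.2 := by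
    intro k
    have h := hq (Gs k).1.1 (Gs k).1.2 (Gs k).2.1 (Gs k).2.2
    have hC : (Gs (k+1)).1.2 = (q (Gs k).1.1 (Gs k).1.2).2.2.2 := congrArg Prod.snd (hGsucc k)
    rw [hC]
    obtain ⟨-, h2, h3, -, -, -, h7, h8, h9⟩ := h
    exact ⟨h2, h3, h7, h8, h9⟩
  have hmono : ∀ j k, j ≤ k → (Gs k).1.2 ⊆ (Gs j).1.2 := by
    intro j k hjk
    induction k with
    | zero => simp_all
    | succ k ih =>
      rcases Nat.lt_or_ge j (k+1) with h | h
      · exact ((hfacts k).2.2.1).trans (ih (Nat.lt_succ_iff.mp h))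
      · have : j = k + 1 := le_antisymm hjk h
        subst this; rfl
  have hdisj : ∀ j k, j ≠ k → W j ∩ W k = ∅ := by
    have main : ∀ j k, j < k → W j ∩ W k = ∅ := by
      intro j k hjk
      have h1 : W k ⊆ (Gs (j+1)).1.2 := ((hfacts k).2.2.2.2).trans (hmono (j+1) k hjk)
      have h2 := (hfacts j).2.2.2.1
      apply eq_empty_of_subset_empty
      intro a ⟨haj, hak⟩
      rw [← h2]; exact ⟨haj, h1 hak⟩
    intro j k hjk
    rcases hjk.lt_or_gt with h | h
    · exact main j k h
    · rw [inter_comm]; exact main k j h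
  have hminj : Function.Injective m := by
    intro j k hjk
    by_contra hne'
    have h1 : W j ∈ x (m j) := (hfacts j).1
    have h2 : W k ∈ x (m j) := hjk ▸ (hfacts k).1
    have := inter_mem h1 h2
    rw [hdisj j k hne'] at this
    exact (x (m j)).neBot.ne (Filter.empty_mem_iff_bot.mp this)
  -- separating sets for each pair
  have hS : ∀ k : ℕ, ∃ S : Set ℕ, S ∈ x (m k) ∧ S ∉ y (m k) :=
    fun k => uf_exists_mem_not_mem (hxy (m k))
  choose S hSx hSy using hS
  set A : Set ℕ := ⋃ k, W k ∩ S k with hA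
  apply Set.infinite_of_injective_forall_mem hminj (s := {n | A ∈ x n ∧ A ∉ y n})
  intro k
  constructor
  · exact Filter.mem_of_superset (inter_mem (hfacts k).1 (hSx k))
      (subset_iUnion (fun j => W j ∩ S j) k)
  · intro hAy
    have hWy : W k ∈ y (m k) := (hfacts k).2.1
    have hsub : A ∩ W k ⊆ S k := by
      rintro a ⟨haA, haW⟩
      obtain ⟨j, haj⟩ := mem_iUnion.mp haA
      by_cases hjk : j = k
      · subst hjk; exact haj.2
      · have := hdisj j k hjk
        exact absurd (Set.mem_inter haj.1 haW) (by rw [this]; exact id)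
    exact hSy k (Filter.mem_of_superset (inter_mem hAy hWy) hsub)
  exact H A

lemma mem_joinM_map (V : Ultrafilter ℕ) (x : ℕ → Ultrafilter ℕ) (A : Set ℕ) :
    A ∈ joinM (Ultrafilter.map x V) ↔ {n | A ∈ x n} ∈ V := by
  exact Iff.rfl

lemma tendsto_joinM_map (V : Ultrafilter ℕ) (x : ℕ → Ultrafilter ℕ) :
    Tendsto x (↑V) (𝓝 (joinM (Ultrafilter.map x V))) := by
  have h : (↑(Ultrafilter.map x V) : Filter (Ultrafilter ℕ)) ≤ 𝓝 (joinM (Ultrafilter.map x V)) :=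
    ultrafilter_converges_iff.mpr rfl
  rwa [Tendsto, ← Ultrafilter.coe_map]

lemma finiteCase (F : Set C(Ultrafilter ℕ, ℝ)) (hfin : F.Finite) (hsep : SepFun F) : False := by
  haveI := hfin.to_subtype
  set Φ : Ultrafilter ℕ → (↥F → ℝ) := fun u f => (f : C(Ultrafilter ℕ, ℝ)) u with hΦ
  have hΦc : Continuous Φ := continuous_pi fun f => (f : C(Ultrafilter ℕ, ℝ)).continuous
  have hΦinj : Function.Injective Φ := by
    intro u v huv
    by_contra hne
    obtain ⟨f, hfF, hf⟩ := hsep u v hne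
    exact hf (congrFun huv ⟨f, hfF⟩)
  obtain ⟨a, ha, φ, hφ, hconv⟩ := (isCompact_range hΦc).tendsto_subseq
    (x := fun n => Φ (pure n)) (fun n => mem_range_self _)
  obtain ⟨z, hz⟩ := ha
  have hemb := hΦc.isClosedEmbedding hΦinj
  have hlim : Tendsto (fun j => (pure (φ j) : Ultrafilter ℕ)) atTop (𝓝 z) := by
    rw [hemb.toIsEmbedding.tendsto_nhds_iff]
    have : (Φ ∘ fun j => (pure (φ j) : Ultrafilter ℕ)) = (fun n => Φ (pure n)) ∘ φ := rfl
    rw [this, hz]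
    exact hconv
  set N : Set ℕ := {j | (pure (φ j) : Ultrafilter ℕ) ≠ z} with hN
  have hNinf : N.Infinite := by
    have hfin2 : {j | (pure (φ j) : Ultrafilter ℕ) = z}.Finite := by
      apply Set.Subsingleton.finite
      intro a ha b hb
      exact hφ.injective (Ultrafilter.pure_injective (ha.trans hb.symm))
    have : N = {j | (pure (φ j) : Ultrafilter ℕ) = z}ᶜ := rfl
    rw [this]
    exact hfin2.infinite_compl
  apply noConv (fun j => pure (φ j)) z N hNinf
  · intro A hA
    have hopen : IsOpen {u : Ultrafilter ℕ | A ∈ u} := ultrafilter_isOpen_basic A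
    have hev : {j | (pure (φ j) : Ultrafilter ℕ) ∈ {u : Ultrafilter ℕ | A ∈ u}} ∈ atTop :=
      hlim (hopen.mem_nhds hA)
    obtain ⟨mb, hmb⟩ := Filter.mem_atTop_sets.mp hev
    apply Set.Finite.subset (Set.finite_Iio mb)
    intro j hj
    by_contra hjm
    exact hj.2 (hmb j (not_lt.mp hjm))
  · exact fun n hn => hn

theorem mainUF : ¬ ∃ F : Set C(Ultrafilter ℕ, ℝ), MinSepFun F := by
  rintro ⟨F, hsep, hmin⟩
  by_cases hfin : F.Finite
  · exact finiteCase F hfin hsep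
  · have hFinf : F.Infinite := hfin
    set e := hFinf.natEmbedding with he
    have hess : ∀ n : ℕ, ∃ u v : Ultrafilter ℕ, u ≠ v ∧
        ∀ g ∈ F, g ≠ (e n : C(Ultrafilter ℕ, ℝ)) → g u = g v := by
      intro n
      have hss : F \ {(e n : C(Ultrafilter ℕ, ℝ))} ⊂ F :=
        Set.sdiff_singleton_ssubset.mpr (e n).2
      have hns := hmin _ hss
      simp only [SepFun] at hns
      push_neg at hns
      obtain ⟨u, v, huv, hall⟩ := hns
      exact ⟨u, v, huv, fun g hg hgn => hall g ⟨hg, by simpa using hgn⟩⟩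
    choose xs ys hne hagree using hess
    obtain ⟨A, hAinf⟩ := star xs ys hne
    haveI : (Filter.cofinite ⊓ 𝓟 {n | A ∈ xs n ∧ A ∉ ys n}).NeBot :=
      hAinf.cofinite_inf_principal_neBot
    set V : Ultrafilter ℕ :=
      Ultrafilter.of (Filter.cofinite ⊓ 𝓟 {n | A ∈ xs n ∧ A ∉ ys n}) with hV
    have hVle := Ultrafilter.of_le (Filter.cofinite ⊓ 𝓟 {n | A ∈ xs n ∧ A ∉ ys n})
    have hVcof : (V : Filter ℕ) ≤ Filter.cofinite := hVle.trans inf_le_left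
    have hVI : {n | A ∈ xs n ∧ A ∉ ys n} ∈ V :=
      le_principal_iff.mp (hVle.trans inf_le_right)
    set X := joinM (Ultrafilter.map xs V) with hX
    set Y := joinM (Ultrafilter.map ys V) with hY
    have hXA : A ∈ X := (mem_joinM_map V xs A).mpr
      (Filter.mem_of_superset hVI fun n hn => hn.1)
    have hYA : A ∉ Y := by
      intro hmem
      have h1 : {n | A ∈ ys n} ∈ V := (mem_joinM_map V ys A).mp hmem
      obtain ⟨n, hn1, hn2⟩ := Ultrafilter.nonempty_of_mem (inter_mem h1 hVI)
      exact hn2.2 hn1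
    have hXY : X ≠ Y := fun h => hYA (h ▸ hXA)
    obtain ⟨f0, hf0F, hf0⟩ := hsep X Y hXY
    apply hf0
    have hTX : Tendsto xs (↑V) (𝓝 X) := tendsto_joinM_map V xs
    have hTY : Tendsto ys (↑V) (𝓝 Y) := tendsto_joinM_map V ys
    have h1 : Tendsto (fun n => f0 (xs n)) (↑V) (𝓝 (f0 X)) :=
      (f0.continuous.tendsto X).comp hTX
    have h2 : Tendsto (fun n => f0 (ys n)) (↑V) (𝓝 (f0 Y)) :=
      (f0.continuous.tendsto Y).comp hTY
    have hEq : {n | f0 (xs n) = f0 (ys n)} ∈ V := by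
      have hsub : {n | (e n : C(Ultrafilter ℕ, ℝ)) ≠ f0} ⊆ {n | f0 (xs n) = f0 (ys n)} :=
        fun n hn => hagree n f0 hf0F (fun h => hn h.symm)
      apply Filter.mem_of_superset _ hsub
      apply hVcof
      rw [Filter.mem_cofinite]
      have hcompl : {n | (e n : C(Ultrafilter ℕ, ℝ)) ≠ f0}ᶜ =
          {n | (e n : C(Ultrafilter ℕ, ℝ)) = f0} := by
        ext n; simp
      rw [hcompl]
      apply Set.Subsingleton.finite
      intro a ha b hb
      apply e.injective
      exact Subtype.val_injective (ha.trans hb.symm)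
    have hEv : (fun n => f0 (xs n)) =ᶠ[(V : Filter ℕ)] (fun n => f0 (ys n)) :=
      Filter.eventuallyEq_of_mem hEq fun n hn => hn
    exact tendsto_nhds_unique (h1.congr' hEv) h2

noncomputable def ufHomeo : Ultrafilter ℕ ≃ₜ StoneCech ℕ := by
  have hpc : Continuous (pure : ℕ → Ultrafilter ℕ) := continuous_of_discreteTopology
  let g : Ultrafilter ℕ → StoneCech ℕ := Ultrafilter.extend stoneCechUnit
  let h : StoneCech ℕ → Ultrafilter ℕ := stoneCechExtend hpc
  have hgc : Continuous g := continuous_ultrafilter_extend _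
  have hhc : Continuous h := continuous_stoneCechExtend hpc
  have hgp : ∀ n : ℕ, g (pure n) = stoneCechUnit n := fun n =>
    congrFun (ultrafilter_extend_extends stoneCechUnit) n
  have hhp : ∀ n : ℕ, h (stoneCechUnit n) = pure n := fun n =>
    congrFun (stoneCechExtend_extends hpc) n
  have hleft : h ∘ g = id := by
    apply denseRange_pure.equalizer (hhc.comp hgc) continuous_id
    ext n
    simp [Function.comp, hgp n, hhp n]
  have hright : g ∘ h = id := by
    apply denseRange_stoneCechUnit.equalizer (hgc.comp hhc) continuous_id
    ext n
    simp [Function.comp, hgp n, hhp n]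
  exact
    { toFun := g
      invFun := h
      left_inv := fun u => congrFun hleft u
      right_inv := fun s => congrFun hright s
      continuous_toFun := hgc
      continuous_invFun := hhc }

lemma transfer {Xs Ys : Type*} [TopologicalSpace Xs] [TopologicalSpace Ys] (e : Xs ≃ₜ Ys)
    (h : ¬ ∃ F : Set C(Xs, ℝ), MinSepFun F) : ¬ ∃ F : Set C(Ys, ℝ), MinSepFun F := by
  rintro ⟨F, hsep, hmin⟩
  apply h
  set Ψ : C(Ys, ℝ) → C(Xs, ℝ) := fun f => f.comp (e : C(Xs, Ys)) with hΨ
  refine ⟨Ψ '' F, ?_, ?_⟩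
  · intro u v huv
    obtain ⟨f, hfF, hf⟩ := hsep (e u) (e v) (fun hh => huv (e.injective hh))
    exact ⟨Ψ f, Set.mem_image_of_mem _ hfF, hf⟩
  · intro G' hG'
    set G : Set C(Ys, ℝ) := {f ∈ F | Ψ f ∈ G'} with hG
    have hGF : G ⊂ F := by
      constructor
      · intro f hf; exact hf.1
      · intro hsub
        obtain ⟨a, haF', haG'⟩ := Set.exists_of_ssubset hG'
        obtain ⟨f, hfF, rfl⟩ := haF'
        exact haG' (hsub hfF).2
    have hnG := hmin G hGF
    intro hsepG'
    apply hnG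
    intro u v huv
    obtain ⟨g', hg'G', hg'⟩ := hsepG' (e.symm u) (e.symm v)
      (fun hh => huv (e.symm.injective hh))
    have hg'F' : g' ∈ Ψ '' F := hG'.1 hg'G'
    obtain ⟨f, hfF, rfl⟩ := hg'F'
    refine ⟨f, ⟨hfF, hg'G'⟩, ?_⟩
    simpa [hΨ, ContinuousMap.comp] using hg'

/-- The Čech–Stone compactification `βω` of the countable discrete space `ω` has no
minimal point-separating set of continuous real-valued functions. -/
theorem stmt6 : ¬ ∃ F : Set C(StoneCech ℕ, ℝ), MinSepFun F :=
  transfer ufHomeo mainUF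
end

section
/- Let X be a normal Tychonoff space and suppose there is a closed subset S ⊆ X with at most one non-isolated point (in S) such that |S| = w(X), where w(X) is the weight of X. Then X has a minimal point-separating set of continuous real-valued functions. -/
open Set TopologicalSpace Classical
noncomputable section

/-- The weight of a topological space: the least cardinality of a base. -/
noncomputable def weight (X : Type*) [TopologicalSpace X] : Cardinal :=
  ⨅ B : {B : Set (Set X) // TopologicalSpace.IsTopologicalBasis B}, Cardinal.mk B.1

lemma exists_basis_weight (X : Type*) [TopologicalSpace X] :
    ∃ B : Set (Set X), IsTopologicalBasis B ∧ Cardinal.mk B = weight X := by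
  have hne : Nonempty {B : Set (Set X) // IsTopologicalBasis B} :=
    ⟨⟨_, isTopologicalBasis_opens⟩⟩
  have : weight X ∈ Set.range
      (fun B : {B : Set (Set X) // IsTopologicalBasis B} => Cardinal.mk B.1) := by
    rw [weight, iInf]
    exact csInf_mem (Set.range_nonempty _)
  obtain ⟨B, hB⟩ := this
  exact ⟨B.1, B.2, hB⟩

lemma exists_bump {X : Type*} [TopologicalSpace X] [T1Space X] [NormalSpace X]
    {U : Set X} {x : X} (hU : IsOpen U) (hx : x ∈ U) :
    ∃ f : C(X, ℝ), f x = 1 ∧ EqOn f 0 Uᶜ ∧ ∀ y, f y ∈ Icc (0:ℝ) 1 := by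
  obtain ⟨f, h0, h1, h01⟩ := exists_continuous_zero_one_of_isClosed
    (isClosed_compl_iff.2 hU) (isClosed_singleton (x := x))
    (by simpa [Set.disjoint_singleton_right] using hx)
  exact ⟨f, h1 rfl, h0, h01⟩

lemma minSep_of_infinite {X : Type*} [TopologicalSpace X] [T35Space X] [NormalSpace X]
    {S : Set X} (hS : IsClosed S) {q : X} (hqS : q ∈ S)
    (hq : ∀ x ∈ S, x ≠ q → ∃ U : Set X, IsOpen U ∧ U ∩ S = {x})
    (hinf : S.Infinite) (hcard : Cardinal.mk S = weight X) :
    ∃ F : Set C(X, ℝ), MinSepFun F := by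
  classical
  haveI := hinf.to_subtype
  have hκ : Cardinal.aleph0 ≤ Cardinal.mk S := Cardinal.aleph0_le_mk _
  obtain ⟨B, hB, hBcard⟩ := exists_basis_weight X
  rw [← hcard] at hBcard
  -- the index type of Urysohn pairs
  set P := {ρ : ↥B × ↥B //
    closure (ρ.1 : Set X) ⊆ (ρ.2 : Set X) ∧ (ρ.2 : Set X) ⊆ Sᶜ} with hPdef
  -- Urysohn functions
  have hkex : ∀ ρ : P, ∃ f : C(X,ℝ), EqOn f 0 ((ρ.1.2 : Set X))ᶜ ∧
      EqOn f 1 (closure (ρ.1.1 : Set X)) ∧ ∀ x, f x ∈ Icc (0:ℝ) 1 := by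
    intro ρ
    refine exists_continuous_zero_one_of_isClosed
      (isClosed_compl_iff.2 (hB.isOpen ρ.1.2.2)) isClosed_closure ?_
    rw [Set.disjoint_left]
    intro a ha ha'
    exact ha (ρ.2.1 ha')
  choose k hk0 hk1 hk01 using hkex
  have hkS : ∀ (ρ : P) (t : X), t ∈ S → k ρ t = 0 :=
    fun ρ t ht => hk0 ρ (fun h' => (ρ.2.2 h') ht)
  -- cardinality bookkeeping
  have hS'card : Cardinal.mk ↥(S \ {q}) = Cardinal.mk ↥S := by
    have h2 := Cardinal.mk_diff_add_mk (Set.singleton_subset_iff.2 hqS)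
    rw [Cardinal.mk_singleton] at h2
    have ha : Cardinal.aleph0 ≤ Cardinal.mk ↥(S \ {q}) := by
      by_contra hlt
      push_neg at hlt
      have := Cardinal.add_lt_aleph0 hlt Cardinal.one_lt_aleph0
      rw [h2] at this
      exact absurd this (not_lt.2 hκ)
    rw [← h2, Cardinal.add_one_eq ha]
  have hPcard : Cardinal.mk (P ⊕ P) ≤ Cardinal.mk ↥(S \ {q}) := by
    have h1 : Cardinal.mk P ≤ Cardinal.mk ↥S := by
      calc Cardinal.mk P ≤ Cardinal.mk (↥B × ↥B) := Cardinal.mk_subtype_le _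
        _ = Cardinal.mk ↥B * Cardinal.mk ↥B := (Cardinal.mul_def _ _).symm
        _ = Cardinal.mk ↥S * Cardinal.mk ↥S := by rw [hBcard]
        _ = Cardinal.mk ↥S := Cardinal.mul_eq_self hκ
    calc Cardinal.mk (P ⊕ P) = Cardinal.mk P + Cardinal.mk P := (Cardinal.add_def _ _).symm
      _ ≤ Cardinal.mk ↥S + Cardinal.mk ↥S := add_le_add h1 h1
      _ = Cardinal.mk ↥S := Cardinal.add_eq_self hκ
      _ = Cardinal.mk ↥(S \ {q}) := hS'card.symm
  obtain ⟨e⟩ := (Cardinal.le_def _ _).1 hPcard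
  -- basic facts about points of S \ {q}
  have hmem : ∀ s : ↥(S \ {q}), (s : X) ∈ S ∧ (s : X) ≠ q :=
    fun s => ⟨s.2.1, by have := s.2.2; simpa using this⟩
  -- isolating neighborhoods
  choose O hOopen hOS using fun s : ↥(S \ {q}) => hq s.1 (hmem s).1 (hmem s).2
  have hOmem : ∀ s : ↥(S \ {q}), (s : X) ∈ O s := by
    intro s
    have : (s : X) ∈ O s ∩ S := by rw [hOS s]; exact rfl
    exact this.1
  -- disjoint separating opens for the two partners of each ρ
  have hne2 : ∀ ρ : P, ((e (Sum.inl ρ)) : X) ≠ ((e (Sum.inr ρ)) : X) := by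
    intro ρ h
    have h2 : e (Sum.inl ρ) = e (Sum.inr ρ) := Subtype.ext h
    have := e.injective h2
    simp at this
  choose W₀ W₁ hW₀open hW₁open hW₀mem hW₁mem hWdisj using
    fun ρ : P => t2_separation (hne2 ρ)
  -- the assigned extra neighborhood and Urysohn function for each point
  set Wass : ↥(S \ {q}) → Set X := fun s =>
    if h : ∃ w, e w = s then Sum.elim W₀ W₁ (Classical.choose h) else univ with hWassdef
  set kass : ↥(S \ {q}) → C(X,ℝ) := fun s =>
    if h : ∃ w, e w = s then k (Sum.elim id id (Classical.choose h)) else 0 with hkassdef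
  have hassl : ∀ ρ : P, Wass (e (Sum.inl ρ)) = W₀ ρ ∧ kass (e (Sum.inl ρ)) = k ρ := by
    intro ρ
    have h : ∃ w, e w = e (Sum.inl ρ) := ⟨Sum.inl ρ, rfl⟩
    have hc : Classical.choose h = Sum.inl ρ := e.injective (Classical.choose_spec h)
    constructor
    · rw [hWassdef]; simp only; rw [dif_pos h, hc]; rfl
    · rw [hkassdef]; simp only; rw [dif_pos h, hc]; rfl
  have hassr : ∀ ρ : P, Wass (e (Sum.inr ρ)) = W₁ ρ ∧ kass (e (Sum.inr ρ)) = k ρ := by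
    intro ρ
    have h : ∃ w, e w = e (Sum.inr ρ) := ⟨Sum.inr ρ, rfl⟩
    have hc : Classical.choose h = Sum.inr ρ := e.injective (Classical.choose_spec h)
    constructor
    · rw [hWassdef]; simp only; rw [dif_pos h, hc]; rfl
    · rw [hkassdef]; simp only; rw [dif_pos h, hc]; rfl
  have hkassS : ∀ (s : ↥(S \ {q})) (t : X), t ∈ S → kass s t = 0 := by
    intro s t ht
    rw [hkassdef]
    simp only
    by_cases h : ∃ w, e w = s
    · rw [dif_pos h]; exact hkS _ t ht
    · rw [dif_neg h]; rfl
  have hWassopen : ∀ s : ↥(S \ {q}), IsOpen (Wass s) := by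
    intro s
    rw [hWassdef]
    simp only
    by_cases h : ∃ w, e w = s
    · rw [dif_pos h]
      rcases Classical.choose h with ρ | ρ
      · exact hW₀open ρ
      · exact hW₁open ρ
    · rw [dif_neg h]; exact isOpen_univ
  have hWassmem : ∀ s : ↥(S \ {q}), (s : X) ∈ Wass s := by
    intro s
    by_cases h : ∃ w, e w = s
    · obtain ⟨w, rfl⟩ := h
      rcases w with ρ | ρ
      · rw [(hassl ρ).1]; exact hW₀mem ρ
      · rw [(hassr ρ).1]; exact hW₁mem ρ
    · rw [hWassdef]; simp only; rw [dif_neg h]; exact mem_univ _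
  -- bump functions
  choose φ hφ1 hφ0 hφ01 using fun s : ↥(S \ {q}) =>
    exists_bump ((hOopen s).inter (hWassopen s)) ⟨hOmem s, hWassmem s⟩
  -- the separating family
  set G : ↥(S \ {q}) → C(X,ℝ) := fun s => φ s + kass s with hGdef
  have hGS0 : ∀ (s : ↥(S \ {q})) (t : X), t ∈ S → t ≠ (s : X) → G s t = 0 := by
    intro s t ht hts
    have hφt : φ s t = 0 := by
      apply hφ0 s
      intro hmem'
      exact hts (by
        have : t ∈ O s ∩ S := ⟨hmem'.1, ht⟩
        rw [hOS s] at this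
        exact this)
    rw [hGdef]
    simp only [ContinuousMap.add_apply]
    rw [hφt, hkassS s t ht]
    norm_num
  have hGS1 : ∀ s : ↥(S \ {q}), G s (s : X) = 1 := by
    intro s
    rw [hGdef]
    simp only [ContinuousMap.add_apply]
    rw [hφ1 s, hkassS s (s : X) (hmem s).1]
    norm_num
  -- the key separation lemma for points outside S
  have hsepP : ∀ x y : X, x ∉ S → x ≠ y →
      ∃ ρ : P, x ∈ (ρ.1.1 : Set X) ∧ y ∉ (ρ.1.2 : Set X) := by
    intro x y hx hxy
    have hU₀open : IsOpen (Sᶜ ∩ {y}ᶜ) := (hS.isOpen_compl).inter isClosed_singleton.isOpen_compl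
    have hU₀mem : Sᶜ ∩ {y}ᶜ ∈ nhds x := hU₀open.mem_nhds ⟨hx, hxy⟩
    obtain ⟨C, hCnhds, hCclosed, hCsub⟩ := exists_mem_nhds_isClosed_subset hU₀mem
    have hxint : x ∈ interior C := mem_interior_iff_mem_nhds.2 hCnhds
    obtain ⟨V, hVB, hxV, hVsub⟩ := hB.exists_subset_of_mem_open hxint isOpen_interior
    have hVS : V ⊆ Sᶜ := fun a ha => (hCsub (interior_subset (hVsub ha))).1
    have hyV : y ∉ V := fun ha => (hCsub (interior_subset (hVsub ha))).2 rfl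
    have hVmem : V ∈ nhds x := (hB.isOpen hVB).mem_nhds hxV
    obtain ⟨C₂, hC₂nhds, hC₂closed, hC₂sub⟩ := exists_mem_nhds_isClosed_subset hVmem
    have hxint₂ : x ∈ interior C₂ := mem_interior_iff_mem_nhds.2 hC₂nhds
    obtain ⟨U, hUB, hxU, hUsub⟩ := hB.exists_subset_of_mem_open hxint₂ isOpen_interior
    have hclU : closure U ⊆ V := by
      calc closure U ⊆ closure (interior C₂) := closure_mono hUsub
        _ ⊆ closure C₂ := closure_mono interior_subset
        _ = C₂ := hC₂closed.closure_eq
        _ ⊆ V := hC₂sub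
    exact ⟨⟨(⟨U, hUB⟩, ⟨V, hVB⟩), hclU, hVS⟩, hxU, hyV⟩
  have key : ∀ x y : X, x ∉ S → x ≠ y → ∃ f ∈ Set.range G, f x ≠ f y := by
    intro x y hx hxy
    obtain ⟨ρ, hxρ, hyρ⟩ := hsepP x y hx hxy
    have hkx : k ρ x = 1 := hk1 ρ (subset_closure hxρ)
    have hky : k ρ y = 0 := hk0 ρ hyρ
    by_contra hcon
    push_neg at hcon
    have hside : ∀ w : P ⊕ P, Sum.elim id id w = ρ →
        kass (e w) = k ρ → y ∈ Wass (e w) := by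
      intro w hwρ hkw
      have h0 := hcon (G (e w)) ⟨_, rfl⟩
      rw [hGdef] at h0
      simp only [ContinuousMap.add_apply] at h0
      rw [hkw, hkx, hky] at h0
      -- h0 : φ (e w) x + 1 = φ (e w) y + 0
      have hφy : φ (e w) y ≠ 0 := by
        have h1 := (hφ01 (e w) x).1
        intro h2
        rw [h2] at h0
        linarith
      have : y ∈ O (e w) ∩ Wass (e w) := by
        by_contra hmem'
        exact hφy (hφ0 (e w) hmem')
      exact this.2
    have hy0 : y ∈ W₀ ρ := by
      have := hside (Sum.inl ρ) rfl (hassl ρ).2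
      rwa [(hassl ρ).1] at this
    have hy1 : y ∈ W₁ ρ := by
      have := hside (Sum.inr ρ) rfl (hassr ρ).2
      rwa [(hassr ρ).1] at this
    exact Set.disjoint_left.1 (hWdisj ρ) hy0 hy1
  refine ⟨Set.range G, ?_, ?_⟩
  · -- separating
    intro x y hxy
    by_cases hx : x ∈ S
    · by_cases hy : y ∈ S
      · by_cases hxq : x = q
        · have hyq : y ≠ q := fun h => hxy (hxq.trans h.symm)
          set s : ↥(S \ {q}) := ⟨y, hy, hyq⟩ with hs
          refine ⟨G s, ⟨s, rfl⟩, ?_⟩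
          rw [hGS1 s, hGS0 s x hx (fun h => hxy h)]
          norm_num
        · set s : ↥(S \ {q}) := ⟨x, hx, hxq⟩ with hs
          refine ⟨G s, ⟨s, rfl⟩, ?_⟩
          rw [hGS1 s, hGS0 s y hy (fun h => hxy h.symm)]
          norm_num
      · obtain ⟨f, hf, hne⟩ := key y x hy (Ne.symm hxy)
        exact ⟨f, hf, hne.symm⟩
    · exact key x y hx hxy
  · -- minimal
    intro Gsub hGsub hsep
    obtain ⟨f, hfF, hfG⟩ := Set.exists_of_ssubset hGsub
    obtain ⟨s, rfl⟩ := hfF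
    obtain ⟨h, hhG, hhne⟩ := hsep (s : X) q (hmem s).2
    obtain ⟨t, rfl⟩ := hGsub.subset hhG
    have hts : t ≠ s := fun h' => hfG (h' ▸ hhG)
    have h1 : G t (s : X) = 0 :=
      hGS0 t (s : X) (hmem s).1 (fun h' => hts (Subtype.ext h').symm)
    have h2 : G t q = 0 := hGS0 t q hqS (Ne.symm (hmem t).2)
    exact hhne (h1.trans h2.symm)


lemma minSep_of_discrete {X : Type*} [TopologicalSpace X] [DiscreteTopology X] :
    ∃ F : Set C(X, ℝ), MinSepFun F := by
  by_cases hX : Subsingleton X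
  · refine ⟨∅, fun x y hxy => absurd (Subsingleton.elim x y) hxy,
      fun G hG => absurd (Set.subset_empty_iff.1 hG.subset) hG.ne⟩
  · rw [not_subsingleton_iff_nontrivial] at hX
    obtain ⟨a, b, hab⟩ := exists_pair_ne X
    set χ : X → C(X, ℝ) := fun x => ⟨fun y => if y = x then 1 else 0,
      continuous_of_discreteTopology⟩ with hχ
    have hχ1 : ∀ x, χ x x = 1 := fun x => by simp [hχ]
    have hχ0 : ∀ x y, y ≠ x → χ x y = 0 := fun x y h => by simp [hχ, h]
    have hχinj : Function.Injective χ := by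
      intro s t hst
      by_contra hne
      have h1 := hχ1 s
      rw [hst] at h1
      rw [hχ0 t s hne] at h1
      norm_num at h1
    refine ⟨χ '' {x | x ≠ b}, ?_, ?_⟩
    · intro x y hxy
      by_cases hxb : x = b
      · exact ⟨χ y, ⟨y, fun h => hxy (hxb.trans h.symm), rfl⟩, by
          rw [hχ1 y, hχ0 y x hxy]; norm_num⟩
      · exact ⟨χ x, ⟨x, hxb, rfl⟩, by
          rw [hχ1 x, hχ0 x y (Ne.symm hxy)]; norm_num⟩
    · intro G hG hsep
      obtain ⟨f, hfF, hfG⟩ := Set.exists_of_ssubset hG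
      obtain ⟨x₀, hx₀, rfl⟩ := hfF
      obtain ⟨h, hhG, hhne⟩ := hsep x₀ b hx₀
      obtain ⟨t, htb, rfl⟩ := hG.subset hhG
      have hts : t ≠ x₀ := fun h' => hfG (h' ▸ hhG)
      exact hhne (by rw [hχ0 t x₀ (Ne.symm hts), hχ0 t b (Ne.symm htb)])

lemma discrete_of_weight_lt_aleph0 {X : Type*} [TopologicalSpace X] [T1Space X]
    (h : weight X < Cardinal.aleph0) : DiscreteTopology X := by
  obtain ⟨B, hB, hBcard⟩ := exists_basis_weight X
  rw [← hBcard, Cardinal.lt_aleph0_iff_finite] at h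
  have hBfin : B.Finite := Set.finite_coe_iff.1 h
  apply discreteTopology_iff_isOpen_singleton.2
  intro x
  have hT : ({b ∈ B | x ∈ b} : Set (Set X)).Finite := hBfin.subset (fun b hb => hb.1)
  have hUopen : IsOpen (⋂₀ {b ∈ B | x ∈ b}) :=
    hT.isOpen_sInter (fun b hb => hB.isOpen hb.1)
  have hxU : x ∈ ⋂₀ {b ∈ B | x ∈ b} := fun b hb => hb.2
  have hUsub : ⋂₀ {b ∈ B | x ∈ b} ⊆ {x} := by
    intro y hy
    by_contra hyx
    rw [mem_singleton_iff] at hyx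
    obtain ⟨V, hVopen, hxV, hyV⟩ := t1Space_iff_exists_open.1 ‹T1Space X› (Ne.symm hyx)
    obtain ⟨b, hbB, hxb, hbV⟩ := hB.exists_subset_of_mem_open hxV hVopen
    exact hyV (hbV (hy b ⟨hbB, hxb⟩))
  have : ({x} : Set X) = ⋂₀ {b ∈ B | x ∈ b} :=
    Subset.antisymm (singleton_subset_iff.2 hxU) hUsub
  rw [this]
  exact hUopen

/-- A point `p ∈ S` is isolated in the subspace `S` iff some open set of `X` meets `S`
exactly in `p`. `S` has at most one non-isolated point when all its points with at most
one exception are isolated in `S`. If a normal Tychonoff space `X` has a closed subset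
`S` with at most one non-isolated point and `|S| = w(X)`, then `X` has a minimal
point-separating set of continuous real-valued functions. -/
theorem stmt8 {X : Type*} [TopologicalSpace X] [T35Space X] [NormalSpace X]
    (S : Set X) (hS : IsClosed S)
    (hiso : ∃ p : X, ∀ x ∈ S, x ≠ p → ∃ U : Set X, IsOpen U ∧ U ∩ S = {x})
    (hcard : Cardinal.mk S = weight X) :
    ∃ F : Set C(X, ℝ), MinSepFun F := by
  by_cases hfin : S.Finite
  · haveI := hfin.to_subtype
    have hw : weight X < Cardinal.aleph0 := by
      rw [← hcard]
      exact Cardinal.lt_aleph0_of_finite _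
    haveI := discrete_of_weight_lt_aleph0 hw
    exact minSep_of_discrete
  · have hinf : S.Infinite := hfin
    obtain ⟨p, hp⟩ := hiso
    by_cases hpS : p ∈ S
    · exact minSep_of_infinite hS hpS hp hinf hcard
    · obtain ⟨q, hqS⟩ := hinf.nonempty
      exact minSep_of_infinite hS hqS
        (fun x hx _ => hp x hx (fun h => hpS (h ▸ hx))) hinf hcard
end
end

section
/- For every infinite Tychonoff space X, the Alexandroff double of X has a minimal point-separating set of continuous real-valued functions of cardinality |X|. -/
/-- The Alexandroff double of `X`: underlying set `X × Bool`, where `(x, true)` plays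
the role of the copy `x'` of `x`. -/
def AlexandroffDouble (X : Type*) : Type _ := X × Bool

/-- Topology of the Alexandroff double: each copy `(x, true)` is isolated, and the
basic neighborhoods of `(x, false)` are of the form `(U × Bool) \ {(x, true)}` for `U`
an open neighborhood of `x` in `X`. -/
instance AlexandroffDouble.topologicalSpace (X : Type*) [TopologicalSpace X] :
    TopologicalSpace (AlexandroffDouble X) :=
  TopologicalSpace.generateFrom
    ({S : Set (X × Bool) | ∃ x : X, S = {(x, true)}} ∪
     {S : Set (X × Bool) | ∃ (U : Set X) (x : X), IsOpen U ∧ x ∈ U ∧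
        S = (U ×ˢ (Set.univ : Set Bool)) \ {(x, true)}})

namespace ADAux

open scoped Classical

variable {X : Type*} [TopologicalSpace X]

/-- The projection from the Alexandroff double to the base space. -/
def projAD : AlexandroffDouble X → X := Prod.fst

lemma isOpen_singleton_true (z : X) :
    IsOpen ({(z, true)} : Set (AlexandroffDouble X)) :=
  TopologicalSpace.GenerateOpen.basic _ (Or.inl ⟨z, rfl⟩)

lemma isClosed_singleton_true (z : X) :
    IsClosed ({(z, true)} : Set (AlexandroffDouble X)) := by
  rw [← isOpen_compl_iff]
  have h : ({(z, true)} : Set (AlexandroffDouble X))ᶜ =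
      ((Set.univ : Set X) ×ˢ (Set.univ : Set Bool)) \ {(z, true)} := by
    rw [Set.univ_prod_univ]
    exact Set.compl_eq_univ_diff _
  rw [h]
  exact TopologicalSpace.GenerateOpen.basic _
    (Or.inr ⟨Set.univ, z, isOpen_univ, trivial, rfl⟩)

lemma isClopen_singleton_true (z : X) :
    IsClopen ({(z, true)} : Set (AlexandroffDouble X)) :=
  ⟨isClosed_singleton_true z, isOpen_singleton_true z⟩

lemma continuous_projAD : Continuous (projAD : AlexandroffDouble X → X) := by
  rw [continuous_def]
  intro U hU
  have h : (projAD : AlexandroffDouble X → X) ⁻¹' U =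
      ⋃ x ∈ U, (({(x, true)} : Set (AlexandroffDouble X)) ∪
        ((U ×ˢ (Set.univ : Set Bool)) \ {(x, true)})) := by
    ext q
    constructor
    · intro hq
      rcases q with ⟨p, b⟩
      have hp : p ∈ U := hq
      refine Set.mem_iUnion₂.mpr ⟨p, hp, ?_⟩
      cases b
      · exact Or.inr ⟨⟨hp, trivial⟩, fun hc => Bool.noConfusion (congrArg Prod.snd hc)⟩
      · exact Or.inl rfl
    · intro hq
      obtain ⟨x, hx, h⟩ := Set.mem_iUnion₂.mp hq
      rcases h with h | h
      · have hq' : q = ((x, true) : AlexandroffDouble X) := h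
        show q.1 ∈ U
        rw [hq']; exact hx
      · exact h.1.1
  rw [h]
  refine isOpen_biUnion fun x hx => ?_
  exact (isOpen_singleton_true x).union
    (TopologicalSpace.GenerateOpen.basic _ (Or.inr ⟨U, x, hU, hx, rfl⟩))

/-- continuous indicator of the isolated point `(z, true)` -/
noncomputable def ind (z : X) : C(AlexandroffDouble X, ℝ) where
  toFun := fun p => if p = (z, true) then 1 else 0
  continuous_toFun := by
    have hcl : frontier {p : AlexandroffDouble X | p = (z, true)} = ∅ :=
      (isClopen_singleton_true z).frontier_eq
    exact Continuous.if (fun a ha => absurd (hcl ▸ ha) (Set.notMem_empty a))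
      continuous_const continuous_const

/-- Urysohn for T3.5 spaces. -/
lemma urysohn [T35Space X] {a b : X} (hab : a ≠ b) :
    ∃ g : C(X, ℝ), g a = 0 ∧ g b = 2 := by
  obtain ⟨f, hf, hfa, hfb⟩ :=
    CompletelyRegularSpace.completely_regular a {b} isClosed_singleton
      (by simpa using hab)
  refine ⟨⟨fun x => 2 * (f x : ℝ), by continuity⟩, ?_, ?_⟩
  · simp [hfa]
  · have : f b = 1 := hfb rfl
    simp [this]

end ADAux

open ADAux in
/-- The Alexandroff double of any infinite Tychonoff space `X` has a minimal
point-separating set of continuous real-valued functions of cardinality `|X|`. -/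
theorem stmt10 (X : Type*) [TopologicalSpace X] [T35Space X] [Infinite X] :
    ∃ F : Set C(AlexandroffDouble X, ℝ), MinSepFun F ∧ Cardinal.mk F = Cardinal.mk X := by
  classical
  -- a bijection X ≃ X × X
  have hcard : Cardinal.mk (X × X) = Cardinal.mk X := by
    simp [Cardinal.mk_prod, Cardinal.lift_id,
      Cardinal.mul_eq_self (Cardinal.aleph0_le_mk X)]
  obtain ⟨e⟩ := Cardinal.eq.mp hcard.symm
  -- choose base separating functions
  have hg : ∀ x : X, ∃ g : C(X, ℝ),
      (e x).1 ≠ (e x).2 → (g (e x).1 = 0 ∧ g (e x).2 = 2) := by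
    intro x
    by_cases h : (e x).1 = (e x).2
    · exact ⟨0, fun h' => absurd h h'⟩
    · obtain ⟨g, hg0, hg2⟩ := urysohn h
      exact ⟨g, fun _ => ⟨hg0, hg2⟩⟩
  choose g hgspec using hg
  -- the family
  let f : X → C(AlexandroffDouble X, ℝ) :=
    fun x => (g x).comp ⟨projAD, continuous_projAD⟩ + ind x
  have hfval : ∀ x : X, ∀ p : AlexandroffDouble X,
      f x p = g x (projAD p) + if p = (x, true) then 1 else 0 := fun x p => rfl
  -- y ≠ x implies f y takes equal values on the pair over x
  have hpair : ∀ x y : X, y ≠ x → f y (x, false) = f y (x, true) := by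
    intro x y hyx
    rw [hfval y (x, false), hfval y (x, true)]
    have h1 : ((x, false) : AlexandroffDouble X) ≠ (y, true) := by
      simp [Prod.ext_iff]
    have h2 : ((x, true) : AlexandroffDouble X) ≠ (y, true) := by
      simp [Prod.ext_iff]; intro h; exact absurd h.symm hyx
    exact congrArg₂ (· + ·) rfl ((if_neg h1).trans (if_neg h2).symm)
  have hsep : ∀ x : X, f x (x, false) ≠ f x (x, true) := by
    intro x
    rw [hfval x (x, false), hfval x (x, true)]
    have h1 : ((x, false) : AlexandroffDouble X) ≠ (x, true) := by
      simp [Prod.ext_iff]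
    refine ne_of_eq_of_ne (congrArg₂ (· + ·) rfl (if_neg h1)) (ne_of_ne_of_eq ?_ (congrArg₂ (· + ·) rfl (if_pos rfl)).symm)
    have h2 : projAD ((x, false) : AlexandroffDouble X) =
        projAD ((x, true) : AlexandroffDouble X) := rfl
    rw [h2]
    intro hc
    linarith
  -- injectivity
  have hinj : Function.Injective f := by
    intro x y hxy
    by_contra hne
    have h := hpair x y (Ne.symm hne)
    rw [← hxy] at h
    exact hsep x h
  refine ⟨Set.range f, ⟨?_, ?_⟩, ?_⟩
  · -- separating
    rintro ⟨p, s⟩ ⟨q, t⟩ hne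
    by_cases hpq : p = q
    · subst hpq
      have hst : s ≠ t := fun h => hne (by rw [h])
      refine ⟨f p, Set.mem_range_self p, ?_⟩
      rcases Bool.eq_false_or_eq_true s with hs | hs <;>
        rcases Bool.eq_false_or_eq_true t with ht | ht <;>
        subst hs <;> subst ht <;>
        first
          | exact absurd rfl hst
          | exact hsep p
          | exact (hsep p).symm
    · -- use z with e z = (p, q)
      set z := e.symm (p, q) with hz
      have hez : e z = (p, q) := e.apply_symm_apply _
      have h1 : (e z).1 = p := by rw [hez]
      have h2 : (e z).2 = q := by rw [hez]
      have hne' : (e z).1 ≠ (e z).2 := by rw [h1, h2]; exact hpq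
      obtain ⟨hgz0, hgz2⟩ := hgspec z hne'
      rw [h1] at hgz0; rw [h2] at hgz2
      refine ⟨f z, Set.mem_range_self z, fun hcontra => ?_⟩
      rw [hfval z (p, s), hfval z (q, t)] at hcontra
      have e1 : (if ((p, s) : AlexandroffDouble X) = (z, true) then (1:ℝ) else 0) ≤ 1 := by
        split <;> norm_num
      have e2 : (0:ℝ) ≤ if ((q, t) : AlexandroffDouble X) = (z, true) then (1:ℝ) else 0 := by
        split <;> norm_num
      have hv1 : g z (projAD ((p, s) : AlexandroffDouble X)) = 0 := hgz0
      have hv2 : g z (projAD ((q, t) : AlexandroffDouble X)) = 2 := hgz2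
      rw [hv1, hv2] at hcontra
      split_ifs at hcontra <;> norm_num at hcontra
  · -- minimality
    rintro G ⟨hGsub, hGne⟩ hGsep
    obtain ⟨h, hhF, hhG⟩ := Set.exists_of_ssubset ⟨hGsub, hGne⟩
    obtain ⟨x, rfl⟩ := hhF
    obtain ⟨h', hh'G, hh'⟩ := hGsep (x, false) (x, true)
      (fun hc => Bool.noConfusion (congrArg Prod.snd hc))
    obtain ⟨y, rfl⟩ := hGsub hh'G
    have hyx : y ≠ x := fun h => hhG (h ▸ hh'G)
    exact hh' (hpair x y hyx)
  · rw [Cardinal.mk_range_eq _ hinj]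
end

section
/- For every infinite Tychonoff space X, the topological sum X ⊕ D of X with a discrete space D of cardinality |X| has a minimal point-separating set of continuous real-valued functions of cardinality |X|. -/
universe u

lemma sep_exists {X : Type u} [TopologicalSpace X] [T35Space X] {x y : X} (h : x ≠ y) :
    ∃ f : C(X, ℝ), f x ≠ f y := by
  obtain ⟨f, cf, hfx, hfy⟩ := CompletelyRegularSpace.completely_regular x {y}
    isClosed_singleton (by simpa)
  refine ⟨⟨fun z => (f z : ℝ), continuous_subtype_val.comp cf⟩, ?_⟩
  have h1 : f y = 1 := hfy rfl
  simp [hfx, h1]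

/-- For every infinite Tychonoff space `X`, the topological sum of `X` with a discrete
space `D` of cardinality `|X|` has a minimal point-separating set of continuous
real-valued functions of cardinality `|X|`. -/
theorem stmt11 (X : Type u) [TopologicalSpace X] [T35Space X] [Infinite X]
    (D : Type u) [TopologicalSpace D] [DiscreteTopology D]
    (hD : Cardinal.mk D = Cardinal.mk X) :
    ∃ F : Set C(X ⊕ D, ℝ), MinSepFun F ∧ Cardinal.mk F = Cardinal.mk X := by
  classical
  have hsep' : ∀ p : X × X, ∃ f : C(X, ℝ), p.1 ≠ p.2 → f p.1 ≠ f p.2 := by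
    intro p
    by_cases h : p.1 = p.2
    · exact ⟨0, fun hc => absurd h hc⟩
    · obtain ⟨f, hf⟩ := sep_exists h; exact ⟨f, fun _ => hf⟩
  choose sep hsep using hsep'
  obtain ⟨x₀⟩ : Nonempty X := inferInstance
  have hℵ : (Cardinal.aleph0 : Cardinal) ≤ Cardinal.mk X := Cardinal.aleph0_le_mk X
  have h2 : Cardinal.mk (X × X) = Cardinal.mk X := by
    rw [Cardinal.mk_prod, Cardinal.lift_id, Cardinal.mul_eq_self hℵ]
  have hOpt : Cardinal.mk (Option (X × X)) = Cardinal.mk X := by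
    rw [Cardinal.mk_option, h2, Cardinal.add_one_eq hℵ]
  have hcard : Cardinal.mk (Option ((X × X) ⊕ (X × X))) = Cardinal.mk D := by
    rw [hD, Cardinal.mk_option, Cardinal.mk_sum, Cardinal.lift_id, h2,
      Cardinal.add_eq_self hℵ, Cardinal.add_one_eq hℵ]
  obtain ⟨e⟩ := Cardinal.eq.mp hcard
  -- value of the function indexed by `o` on the D-part
  set fD : Option (X × X) → D → ℝ := fun o d =>
    (e.symm d).elim (o.elim 2 (fun i => sep i x₀))
      (fun p => o.elim 1 (fun i =>
        Sum.elim (fun j => if j = i then 3 else 0) (fun j => if j = i then 4 else 0) p))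
    with hfD
  set g : Option (X × X) → C(X ⊕ D, ℝ) := fun o =>
    ⟨Sum.elim (fun x => o.elim 0 (fun i => sep i x)) (fD o), by
      refine Continuous.sumElim ?_ continuous_of_discreteTopology
      cases o with
      | none => exact continuous_const
      | some i => exact (sep i).continuous⟩
    with hg
  have hXval : ∀ o x, g o (Sum.inl x) = o.elim 0 (fun i => sep i x) := fun o x => rfl
  have hDval : ∀ o d, g o (Sum.inr d) = fD o d := fun o d => rfl
  have ginj : Function.Injective g := by
    intro o o' h
    rcases o with _ | i <;> rcases o' with _ | i'
    · rfl
    · have := congrFun (congrArg DFunLike.coe h) (Sum.inr (e (some (Sum.inl i'))))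
      rw [hDval, hDval, hfD] at this
      simp at this
    · have := congrFun (congrArg DFunLike.coe h) (Sum.inr (e (some (Sum.inl i))))
      rw [hDval, hDval, hfD] at this
      simp at this
    · by_cases hii : i = i'
      · rw [hii]
      · have := congrFun (congrArg DFunLike.coe h) (Sum.inr (e (some (Sum.inl i))))
        rw [hDval, hDval, hfD] at this
        simp [hii, Ne.symm hii] at this
  refine ⟨Set.range g, ⟨?_, ?_⟩, ?_⟩
  · -- SepFun
    rintro (x | d) (y | d') hne
    · have hxy : x ≠ y := fun h => hne (h ▸ rfl)
      exact ⟨g (some (x, y)), Set.mem_range_self _, by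
        rw [hXval, hXval]; exact hsep (x, y) hxy⟩
    · refine ⟨g none, Set.mem_range_self _, ?_⟩
      rw [hXval, hDval, hfD]
      rcases hp : e.symm d' with _ | p <;> simp [hp]
    · refine ⟨g none, Set.mem_range_self _, ?_⟩
      rw [hXval, hDval, hfD]
      rcases hp : e.symm d with _ | p <;> simp [hp]
    · have hd : d ≠ d' := fun h => hne (h ▸ rfl)
      have hp : e.symm d ≠ e.symm d' := fun h => hd (e.symm.injective h)
      rcases hq : e.symm d with _ | (j | j) <;> rcases hq' : e.symm d' with _ | (j' | j')
      · exact absurd (hq.trans hq'.symm) hp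
      · exact ⟨g none, Set.mem_range_self _, by
          rw [hDval, hDval, hfD]; simp [hq, hq']⟩
      · exact ⟨g none, Set.mem_range_self _, by
          rw [hDval, hDval, hfD]; simp [hq, hq']⟩
      · exact ⟨g none, Set.mem_range_self _, by
          rw [hDval, hDval, hfD]; simp [hq, hq']⟩
      · have hj : j ≠ j' := by
          intro h; exact hp (by rw [hq, hq', h])
        refine ⟨g (some j), Set.mem_range_self _, ?_⟩
        rw [hDval, hDval, hfD]
        simp [hq, hq', Ne.symm hj]
      · refine ⟨g (some j), Set.mem_range_self _, ?_⟩
        rw [hDval, hDval, hfD]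
        by_cases hjj : j' = j <;> simp [hq, hq', hjj]
      · exact ⟨g none, Set.mem_range_self _, by
          rw [hDval, hDval, hfD]; simp [hq, hq']⟩
      · refine ⟨g (some j), Set.mem_range_self _, ?_⟩
        rw [hDval, hDval, hfD]
        by_cases hjj : j' = j <;> simp [hq, hq', hjj]
      · have hj : j ≠ j' := by
          intro h; exact hp (by rw [hq, hq', h])
        refine ⟨g (some j), Set.mem_range_self _, ?_⟩
        rw [hDval, hDval, hfD]
        simp [hq, hq', Ne.symm hj]
  · -- minimality
    intro G hG hSep
    obtain ⟨f, hfF, hfG⟩ := Set.exists_of_ssubset hG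
    obtain ⟨o, rfl⟩ := hfF
    cases o with
    | none =>
      obtain ⟨h, hhG, hne⟩ := hSep (Sum.inl x₀) (Sum.inr (e none)) (by simp)
      obtain ⟨o', rfl⟩ := hG.subset hhG
      have ho' : o' ≠ none := fun h' => hfG (h' ▸ hhG)
      obtain ⟨i, rfl⟩ := Option.ne_none_iff_exists'.mp ho'
      apply hne
      rw [hXval, hDval, hfD]
      simp
    | some i =>
      have hab : (Sum.inr (e (some (Sum.inl i))) : X ⊕ D) ≠ Sum.inr (e (some (Sum.inr i))) := by
        simp [e.injective.ne_iff]
      obtain ⟨h, hhG, hne⟩ := hSep _ _ hab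
      obtain ⟨o', rfl⟩ := hG.subset hhG
      have ho' : o' ≠ some i := fun h' => hfG (h' ▸ hhG)
      apply hne
      rw [hDval, hDval, hfD]
      rcases o' with _ | i'
      · simp
      · have hii : i ≠ i' := fun h' => ho' (by rw [h'])
        simp [hii]
  · rw [Cardinal.mk_range_eq g ginj, hOpt]
end

section
/- If each space X_α (α ∈ A) has a minimal point-separating set of continuous real-valued functions, then the product ∏_{α∈A} X_α has a minimal point-separating set of continuous real-valued functions; concretely, if F_α is minimal separating for X_α, then {f ∘ p_α : α ∈ A, f ∈ F_α} is minimal separating for the product, where p_α is the projection. -/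
/-- If each (nonempty) space `X α` has a minimal point-separating set `F α` of
continuous real-valued functions, then `{f ∘ p_α : α ∈ A, f ∈ F α}` is a minimal
point-separating set for the product `∀ α, X α`, where `p_α` is the projection. -/
theorem stmt12 {A : Type*} {X : A → Type*} [∀ α, TopologicalSpace (X α)]
    [∀ α, Nonempty (X α)] (F : ∀ α, Set C(X α, ℝ)) (hF : ∀ α, MinSepFun (F α)) :
    MinSepFun (⋃ α, (fun f : C(X α, ℝ) =>
      f.comp ⟨fun x : (∀ β, X β) => x α, continuous_apply α⟩) '' F α) := by
  classical
  constructor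
  · intro x y hxy
    obtain ⟨α, hα⟩ : ∃ α, x α ≠ y α := by
      by_contra h; push_neg at h; exact hxy (funext h)
    obtain ⟨f, hf, hsep⟩ := (hF α).1 (x α) (y α) hα
    exact ⟨_, Set.mem_iUnion.2 ⟨α, ⟨f, hf, rfl⟩⟩, hsep⟩
  · rintro G ⟨hsub, hne⟩ hGsep
    apply hne
    -- key claim: every coordinate family is entirely used
    have key : ∀ α, ∀ f ∈ F α,
        f.comp ⟨fun x : (∀ β, X β) => x α, continuous_apply α⟩ ∈ G := by
      intro α
      set Gα : Set C(X α, ℝ) :=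
        {f | f ∈ F α ∧ f.comp ⟨fun x : (∀ β, X β) => x α, continuous_apply α⟩ ∈ G} with hGα
      have hGsepα : SepFun Gα := by
        intro x y hxy
        set z : ∀ β, X β := Function.update (fun β => Classical.arbitrary (X β)) α x with hz
        set w : ∀ β, X β := Function.update (fun β => Classical.arbitrary (X β)) α y with hw
        have hzw : z ≠ w := by
          intro h
          apply hxy
          have := congrFun h α
          simpa [hz, hw] using this
        obtain ⟨h, hhG, hsep⟩ := hGsep z w hzw
        obtain ⟨β, g, hg, rfl⟩ : ∃ β g, g ∈ F β ∧
            g.comp ⟨fun x : (∀ γ, X γ) => x β, continuous_apply β⟩ = h := by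
          obtain ⟨s, hs⟩ := Set.mem_iUnion.1 (hsub hhG)
          obtain ⟨g, hg, hge⟩ := hs
          exact ⟨s, g, hg, hge⟩
        by_cases hβ : β = α
        · subst hβ
          refine ⟨g, ⟨hg, hhG⟩, ?_⟩
          simpa [hz, hw] using hsep
        · exfalso
          apply hsep
          simp only [ContinuousMap.comp_apply, ContinuousMap.coe_mk]
          have : z β = w β := by simp [hz, hw, Function.update_of_ne hβ]
          rw [this]
      have hsubα : Gα ⊆ F α := fun f hf => hf.1
      have : Gα = F α := by
        by_contra hne'
        exact (hF α).2 Gα ⟨hsubα, fun h => hne' (le_antisymm hsubα h)⟩ hGsepα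
      intro f hf
      have : f ∈ Gα := this ▸ hf
      exact this.2
    intro h hh
    obtain ⟨s, hs⟩ := Set.mem_iUnion.1 hh
    obtain ⟨f, hf, hfe⟩ := hs
    exact hfe ▸ key s f hf
end
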